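/- In synchronous majority dynamics on a locally finite graph with all degrees odd, where A^i_{t+1} = sgn(∑_{j ∈ N(i)} A^j_t), the quantity J^i_t = (1/2)(A^i_{t+1} − A^i_{t−1}) · ∑_{j ∈ N(i)} z(i,j) A^j_t is nonnegative for any d-legal edge weighting z, and J^i_t = 0 if and only if A^i_{t+1} = A^i_{t−1}. -/

import Mathlib

lemma key_lemma {V : Type*} (N : Finset V) (d : ℕ) (hd : 3 ≤ d)
    (hcard : N.card ≤ d)
    (w : V → ℝ) (hw : ∀ j ∈ N, 0 < w j)
    (hratio : ∀ j ∈ N, ∀ k ∈ N, w j / w k < ((d : ℝ) + 1) / ((d : ℝ) - 1))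
    (f : V → ℤ) (hf : ∀ j ∈ N, f j = 1 ∨ f j = -1)
    (hs : 0 < ∑ j ∈ N, f j) :
    0 < ∑ j ∈ N, w j * (f j : ℝ) := by
  classical
  set P := N.filter (fun j => f j = 1) with hP
  set M := N.filter (fun j => ¬ f j = 1) with hM
  have hMf : ∀ j ∈ M, f j = -1 := by
    intro j hj
    simp only [hM, Finset.mem_filter] at hj
    rcases hf j hj.1 with h | h
    · exact absurd h hj.2
    · exact h
  have hPsub : P ⊆ N := Finset.filter_subset _ _
  have hMsub : M ⊆ N := Finset.filter_subset _ _
  have h1 : ∑ j ∈ P, f j = (P.card : ℤ) := by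
    rw [Finset.sum_congr rfl (fun j hj => (Finset.mem_filter.mp hj).2)]
    simp [hP]
  have h2 : ∑ j ∈ M, f j = -(M.card : ℤ) := by
    rw [Finset.sum_congr rfl hMf]
    simp
  have hsplit : ∑ j ∈ N, f j = (P.card : ℤ) - M.card := by
    rw [← Finset.sum_filter_add_sum_filter_not N (fun j => f j = 1) f]
    show ∑ j ∈ P, f j + ∑ j ∈ M, f j = _
    rw [h1, h2]; ring
  have hcards : P.card + M.card = N.card :=
    Finset.card_filter_add_card_filter_not _
  have hPMn : M.card < P.card := by
    have : (M.card : ℤ) < P.card := by omega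
    exact_mod_cast this
  have hS1 : ∑ j ∈ P, w j * (f j : ℝ) = ∑ j ∈ P, w j := by
    apply Finset.sum_congr rfl
    intro j hj
    rw [(Finset.mem_filter.mp hj).2]
    push_cast; ring
  have hS2 : ∑ j ∈ M, w j * (f j : ℝ) = -∑ j ∈ M, w j := by
    rw [← Finset.sum_neg_distrib]
    apply Finset.sum_congr rfl
    intro j hj
    rw [hMf j hj]
    push_cast; ring
  have hSsplit : ∑ j ∈ N, w j * (f j : ℝ) = (∑ j ∈ P, w j) - ∑ j ∈ M, w j := by
    rw [← Finset.sum_filter_add_sum_filter_not N (fun j => f j = 1)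
        (fun j => w j * (f j : ℝ))]
    show (∑ j ∈ P, w j * (f j : ℝ)) + ∑ j ∈ M, w j * (f j : ℝ) = _
    rw [hS1, hS2]; ring
  rw [hSsplit]
  have hNne : N.Nonempty := by
    rcases Finset.eq_empty_or_nonempty N with h | h
    · simp [h] at hs
    · exact h
  obtain ⟨j0, hj0, hmin⟩ := N.exists_min_image w hNne
  have hm : 0 < w j0 := hw j0 hj0
  have hPsum : (P.card : ℝ) * w j0 ≤ ∑ j ∈ P, w j := by
    have := Finset.card_nsmul_le_sum P w (w j0)
      (fun j hj => hmin j (hPsub hj))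
    simpa [nsmul_eq_mul] using this
  rcases Finset.eq_empty_or_nonempty M with hMe | hMne
  · have hPne : P.Nonempty := Finset.card_pos.mp (by omega)
    have : 0 < ∑ j ∈ P, w j := Finset.sum_pos (fun j hj => hw j (hPsub hj)) hPne
    simp only [hMe, Finset.sum_empty]
    linarith
  · have hd1 : (0:ℝ) < (d:ℝ) - 1 := by
      have : (3:ℝ) ≤ d := by exact_mod_cast hd
      linarith
    have hMsum : ∑ j ∈ M, w j < (M.card : ℝ) * (((d:ℝ)+1)/((d:ℝ)-1) * w j0) := by
      calc ∑ j ∈ M, w j < ∑ _j ∈ M, ((d:ℝ)+1)/((d:ℝ)-1) * w j0 := by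
            apply Finset.sum_lt_sum_of_nonempty hMne
            intro j hj
            have h1 := hratio j (hMsub hj) j0 hj0
            rw [div_lt_iff₀ hm] at h1
            linarith
        _ = (M.card : ℝ) * (((d:ℝ)+1)/((d:ℝ)-1) * w j0) := by
            rw [Finset.sum_const, nsmul_eq_mul]
    have h2d : 2 * M.card + 1 ≤ d := by omega
    have h2dR : 2 * (M.card : ℝ) + 1 ≤ (d : ℝ) := by exact_mod_cast h2d
    have hPMR : (M.card : ℝ) + 1 ≤ (P.card : ℝ) := by exact_mod_cast hPMn
    have hkey : (M.card : ℝ) * (((d:ℝ)+1)/((d:ℝ)-1)) ≤ (M.card : ℝ) + 1 := by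
      rw [mul_div_assoc', div_le_iff₀ hd1]
      nlinarith
    nlinarith [mul_le_mul_of_nonneg_right hkey hm.le,
      mul_le_mul_of_nonneg_right hPMR hm.le]

/-- In synchronous majority dynamics with a `d`-legal edge weighting `z`,
the quantity `J^i_t = (1/2)(A^i_{t+1} - A^i_{t-1}) ∑_{j ∈ N(i)} z(i,j) A^j_t` is
nonnegative, and vanishes iff `A^i_{t+1} = A^i_{t-1}`. (Here we write the time `t` of the
claim as `t+1`, so `A^i_{t+1} = A (t+2)` and `A^i_{t-1} = A t`.) -/
theorem stmt_1 {V : Type*} (G : SimpleGraph V) [∀ v : V, Fintype (G.neighborSet v)]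
    (d : ℕ) (hd : 3 ≤ d)
    (hodd : ∀ i, Odd (G.degree i)) (hdeg : ∀ i, G.degree i ≤ d)
    (z : V → V → ℝ) (hsym : ∀ i j, z i j = z j i)
    (hz01 : ∀ i j, G.Adj i j → 0 < z i j ∧ z i j ≤ 1)
    (hlegal : ∀ i j k, G.Adj i j → G.Adj i k →
      z i j / z i k < ((d : ℝ) + 1) / ((d : ℝ) - 1))
    (A : ℕ → V → ℤ) (hA0 : ∀ i, A 0 i = 1 ∨ A 0 i = -1)
    (hdyn : ∀ t i, A (t + 1) i =
      if 0 < ∑ j ∈ G.neighborFinset i, A t j then 1 else -1)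
    (i : V) (t : ℕ) :
    0 ≤ (1 / 2 : ℝ) * ((A (t + 2) i : ℝ) - (A t i : ℝ)) *
        ∑ j ∈ G.neighborFinset i, z i j * (A (t + 1) j : ℝ) ∧
    ((1 / 2 : ℝ) * ((A (t + 2) i : ℝ) - (A t i : ℝ)) *
        ∑ j ∈ G.neighborFinset i, z i j * (A (t + 1) j : ℝ) = 0 ↔
      A (t + 2) i = A t i) := by
  classical
  have hpm : ∀ s j, A s j = 1 ∨ A s j = -1 := by
    intro s j
    cases s with
    | zero => exact hA0 j
    | succ n => rw [hdyn n j]; split <;> simp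
  have hwpos : ∀ j ∈ G.neighborFinset i, 0 < z i j := fun j hj =>
    (hz01 i j ((SimpleGraph.mem_neighborFinset _ _ _).mp hj)).1
  have hratio : ∀ j ∈ G.neighborFinset i, ∀ k ∈ G.neighborFinset i,
      z i j / z i k < ((d : ℝ) + 1) / ((d : ℝ) - 1) := fun j hj k hk =>
    hlegal i j k ((SimpleGraph.mem_neighborFinset _ _ _).mp hj)
      ((SimpleGraph.mem_neighborFinset _ _ _).mp hk)
  have hcard : (G.neighborFinset i).card ≤ d := by
    rw [G.card_neighborFinset_eq_degree]; exact hdeg i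
  -- the unweighted sum is odd, hence nonzero
  have hsne : (∑ j ∈ G.neighborFinset i, A (t + 1) j) ≠ 0 := by
    intro h0
    have h1 : ((∑ j ∈ G.neighborFinset i, A (t + 1) j : ℤ) : ZMod 2)
        = ((G.neighborFinset i).card : ZMod 2) := by
      push_cast
      rw [Finset.sum_congr rfl (fun j _ => show ((A (t+1) j : ℤ) : ZMod 2) = 1 by
        rcases hpm (t+1) j with h | h <;> rw [h] <;> decide)]
      simp
    rw [h0] at h1
    obtain ⟨k, hk⟩ := hodd i
    rw [← G.card_neighborFinset_eq_degree] at hk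
    rw [hk] at h1
    have : ((2 * k + 1 : ℕ) : ZMod 2) = 0 := by exact_mod_cast h1.symm
    rw [show ((2 * k + 1 : ℕ) : ZMod 2) = 2 * (k : ZMod 2) + 1 by push_cast; ring,
      show (2 : ZMod 2) = 0 by decide] at this
    simp at this
  have hdyn2 : A (t + 2) i =
      if 0 < ∑ j ∈ G.neighborFinset i, A (t + 1) j then 1 else -1 := hdyn (t + 1) i
  rcases lt_or_gt_of_ne hsne with hneg | hpos
  · -- negative sum: A (t+2) i = -1, and weighted sum negative
    have hA2 : A (t + 2) i = -1 := by rw [hdyn2, if_neg (by omega)]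
    have hSneg : (∑ j ∈ G.neighborFinset i, z i j * (A (t + 1) j : ℝ)) < 0 := by
      have := key_lemma (G.neighborFinset i) d hd hcard (z i) hwpos hratio
        (fun j => -A (t + 1) j) (fun j hj => by rcases hpm (t+1) j with h | h <;> simp [h])
        (by rw [Finset.sum_neg_distrib]; omega)
      have heq : ∑ j ∈ G.neighborFinset i, z i j * ((-A (t + 1) j : ℤ) : ℝ)
          = -∑ j ∈ G.neighborFinset i, z i j * (A (t + 1) j : ℝ) := by
        rw [← Finset.sum_neg_distrib]
        apply Finset.sum_congr rfl
        intro j _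
        push_cast; ring
      rw [heq] at this
      linarith
    rcases hpm t i with h0 | h0 <;> rw [hA2, h0]
    · constructor
      · push_cast; nlinarith
      · constructor
        · intro h; exfalso; push_cast at h; nlinarith
        · intro h; exact absurd h (by decide)
    · constructor
      · push_cast; nlinarith
      · constructor
        · intro _; rfl
        · intro _; push_cast; ring
  · -- positive sum: A (t+2) i = 1, and weighted sum positive
    have hA2 : A (t + 2) i = 1 := by rw [hdyn2, if_pos hpos]
    have hSpos : 0 < ∑ j ∈ G.neighborFinset i, z i j * (A (t + 1) j : ℝ) :=
      key_lemma (G.neighborFinset i) d hd hcard (z i) hwpos hratio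
        (A (t + 1)) (fun j _ => hpm (t+1) j) hpos
    rcases hpm t i with h0 | h0 <;> rw [hA2, h0]
    · constructor
      · push_cast; nlinarith
      · constructor
        · intro _; rfl
        · intro _; push_cast; ring
    · constructor
      · push_cast; nlinarith
      · constructor
        · intro h; exfalso; push_cast at h; nlinarith
        · intro h; exact absurd h (by decide)
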